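/- Let ≺ be a linear order on E(G) satisfying the nesting condition (Q₂). Then for every processive vertex v there is no edge e with I(v)⁺ ≺ e ≺ O(v)⁻. -/
import Mathlib


structure Digraph' (V E : Type) where
  s : E → V
  t : E → V

def conv {E : Type} [LinearOrder E] (X : Set E) : Set E :=
  {y | ∃ a ∈ X, ∃ b ∈ X, a ≤ y ∧ y ≤ b}

namespace Digraph'

variable {V E : Type} (G : Digraph' V E)

/-- One edge can be followed by another. -/
def step (e f : E) : Prop := G.t e = G.s f

/-- The reachable order: a directed path starts with `e₁` and ends with `e₂`
(including the case `e₁ = e₂`). -/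
def reach : E → E → Prop := Relation.ReflTransGen G.step

/-- No directed cycles. -/
def Acyclic : Prop := ∀ e, ¬ Relation.TransGen G.step e e

/-- Incoming edges of a vertex. -/
def I (v : V) : Set E := {e | G.t e = v}

/-- Outgoing edges of a vertex. -/
def O (v : V) : Set E := {e | G.s e = v}

/-- All edges incident to a vertex `v` (incoming or outgoing). -/
def Ev (v : V) : Set E := G.I v ∪ G.O v

variable [LinearOrder E]

/-- (U₁): reachability implies order. -/
def U1 : Prop := ∀ e₁ e₂ : E, G.reach e₁ e₂ → e₁ ≤ e₂

/-- (U₂): for every vertex, the hulls of incoming and outgoing edges are disjoint and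
together give the hull of all incident edges. -/
def U2 : Prop := ∀ v : V,
  conv (G.I v) ∩ conv (G.O v) = ∅ ∧ conv (G.Ev v) = conv (G.I v) ∪ conv (G.O v)

/-- (U₃). -/
def U3 : Prop := ∀ v₁ v₂ : V,
  ((G.I v₁ ∩ conv (G.I v₂)).Nonempty → conv (G.I v₁) ⊆ conv (G.I v₂)) ∧
  ((G.O v₁ ∩ conv (G.O v₂)).Nonempty → conv (G.O v₁) ⊆ conv (G.O v₂))

/-- (Q₂), the nesting condition. -/
def Q2 : Prop := ∀ e₁ e e₂ : E, e₁ < e → e < e₂ →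
  (G.t e₁ = G.t e₂ → G.I (G.t e) ⊆ conv (G.I (G.t e₁))) ∧
  (G.s e₁ = G.s e₂ → G.O (G.s e) ⊆ conv (G.O (G.s e₁))) ∧
  (G.t e₁ = G.s e₂ →
    G.I (G.t e) ⊆ conv (G.I (G.t e₁)) ∨ G.O (G.s e) ⊆ conv (G.O (G.s e₂)))

end Digraph'

open Digraph' in
/-- Under the nesting condition (Q₂), for every processive vertex `v` there is no
edge strictly between `I(v)⁺` and `O(v)⁻`. -/
theorem no_edge_between_of_Q2 {V E : Type} [Fintype V] [Fintype E] [LinearOrder E]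
    (G : Digraph' V E) (hG : G.Acyclic) (hQ2 : G.Q2)
    (v : V) (hI : (G.I v).Nonempty) (hO : (G.O v).Nonempty) :
    ¬ ∃ e : E, (∀ i ∈ G.I v, i < e) ∧ (∀ o ∈ G.O v, e < o) := by

  rintro ⟨e, hIe, hOe⟩
  obtain ⟨i, hi⟩ := hI
  obtain ⟨o, ho⟩ := hO
  have h1 : i < e := hIe i hi
  have h2 : e < o := hOe o ho
  have hts : G.t i = G.s o := by rw [hi, ho]
  rcases (hQ2 i e o h1 h2).2.2 hts with h | h
  · have : e ∈ conv (G.I v) := by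
      rw [← hi]; exact h rfl
    obtain ⟨a, ha, b, hb, _, hbe⟩ := this
    exact absurd hbe (not_le.mpr (hIe b hb))
  · have : e ∈ conv (G.O v) := by
      rw [← ho]; exact h rfl
    obtain ⟨a, ha, b, hb, hae, _⟩ := this
    exact absurd hae (not_le.mpr (hOe a ha))
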